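/- Let A be an n×n Hermitian matrix whose index set is partitioned into r ≥ 2 parts such that all diagonal blocks of A (with respect to this partition) are zero. Then for every real diagonal n×n matrix B, the largest eigenvalue of B − A is at least the largest eigenvalue of B + (1/(r−1))·A. -/

import Mathlib

open Matrix

/-- The largest (real) eigenvalue of a Hermitian complex matrix. -/
noncomputable def maxEigC {m : Type*} [Fintype m] [DecidableEq m]
    (A : Matrix m m ℂ) : ℝ := sSup {t : ℝ | (t : ℂ) ∈ spectrum ℂ A}

open ComplexOrder Finset

lemma maxEigC_eq {m : Type*} [Fintype m] [DecidableEq m] {M : Matrix m m ℂ}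
    (hM : M.IsHermitian) : maxEigC M = sSup (Set.range hM.eigenvalues) := by
  unfold maxEigC
  congr 1
  have : {t : ℝ | (t : ℂ) ∈ spectrum ℂ M} = spectrum ℝ M := by
    ext t
    show ((t:ℂ)) ∈ spectrum ℂ M ↔ _
    rw [show ((t:ℂ)) = algebraMap ℝ ℂ t from rfl]
    exact spectrum.algebraMap_mem_iff ℂ
  rw [this, hM.spectrum_real_eq_range_eigenvalues]

lemma eig_le_maxEigC {m : Type*} [Fintype m] [DecidableEq m] {M : Matrix m m ℂ}
    (hM : M.IsHermitian) (i : m) : hM.eigenvalues i ≤ maxEigC M := by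
  rw [maxEigC_eq hM]
  exact le_csSup (Set.finite_range _).bddAbove ⟨i, rfl⟩

lemma maxEigC_attained {m : Type*} [Fintype m] [DecidableEq m] [Nonempty m]
    {M : Matrix m m ℂ} (hM : M.IsHermitian) : ∃ i, maxEigC M = hM.eigenvalues i := by
  rw [maxEigC_eq hM]
  have h := Set.Nonempty.csSup_mem (Set.range_nonempty _) (Set.finite_range hM.eigenvalues)
  obtain ⟨i, hi⟩ := h
  exact ⟨i, hi.symm⟩

lemma rayleigh_le {m : Type*} [Fintype m] [DecidableEq m] {M : Matrix m m ℂ}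
    (hM : M.IsHermitian) (x : m → ℂ) :
    (star x ⬝ᵥ (M *ᵥ x)).re ≤ maxEigC M * (star x ⬝ᵥ x).re := by
  set t := maxEigC M with ht
  have hpsd : PosSemidef ((t:ℂ) • (1 : Matrix m m ℂ) - M) := by
    have hd : PosSemidef (diagonal (fun i => ((t - hM.eigenvalues i : ℝ) : ℂ))) := by
      refine PosSemidef.diagonal ?_
      intro i
      simp only [Pi.zero_apply, ← Complex.ofReal_zero, Complex.real_le_real]
      linarith [eig_le_maxEigC hM i]
    have h2 := hd.mul_mul_conjTranspose_same (hM.eigenvectorUnitary : Matrix m m ℂ)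
    have hU1 : (hM.eigenvectorUnitary : Matrix m m ℂ) *
        (hM.eigenvectorUnitary : Matrix m m ℂ)ᴴ = 1 := by
      rw [← Matrix.star_eq_conjTranspose]
      exact Unitary.mul_star_self_of_mem hM.eigenvectorUnitary.2
    have hDeq : diagonal (fun i => ((t - hM.eigenvalues i : ℝ) : ℂ)) =
        (t:ℂ) • (1 : Matrix m m ℂ) - diagonal (Complex.ofReal ∘ hM.eigenvalues) := by
      ext i j
      by_cases h : i = j <;>
        simp [h, Matrix.diagonal_apply, Matrix.one_apply, Complex.ofReal_sub]
    rw [hDeq] at h2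
    have key : (hM.eigenvectorUnitary : Matrix m m ℂ) *
        ((t:ℂ) • (1 : Matrix m m ℂ) - diagonal (Complex.ofReal ∘ hM.eigenvalues)) *
        (hM.eigenvectorUnitary : Matrix m m ℂ)ᴴ = (t:ℂ) • (1 : Matrix m m ℂ) - M := by
      rw [Matrix.mul_sub, Matrix.sub_mul, mul_smul_comm, Matrix.mul_one, smul_mul_assoc,
        hU1]
      congr 1
      conv_rhs => rw [hM.spectral_theorem]
      rw [Unitary.conjStarAlgAut_apply, Matrix.star_eq_conjTranspose]
      rfl
    rwa [key] at h2
  have h0 := hpsd.dotProduct_mulVec_nonneg x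
  rw [Matrix.sub_mulVec, Matrix.smul_mulVec, Matrix.one_mulVec, dotProduct_sub,
    dotProduct_smul] at h0
  have h1 := (Complex.le_def.mp h0).1
  simp only [Complex.zero_re, Complex.sub_re, smul_eq_mul, Complex.re_ofReal_mul] at h1
  linarith

lemma quadForm_expand {m : Type*} [Fintype m] (M : Matrix m m ℂ) (v w : m → ℂ) :
    star v ⬝ᵥ (M *ᵥ w) = ∑ j, ∑ k, (starRingEnd ℂ) (v j) * M j k * w k := by
  simp [dotProduct, mulVec, Finset.mul_sum, mul_assoc]

/-- If a Hermitian matrix `A` is partitioned into `r ≥ 2` blocks with all diagonal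
blocks zero, then for every real diagonal matrix `B`,
`μ(B − A) ≥ μ(B + (1/(r−1))·A)`. -/
theorem stmt0 {n r : ℕ} (hr : 2 ≤ r) (A : Matrix (Fin n) (Fin n) ℂ)
    (hA : A.IsHermitian) (p : Fin n → Fin r) (hp : Function.Surjective p)
    (hblock : ∀ j k : Fin n, p j = p k → A j k = 0) (b : Fin n → ℝ) :
    maxEigC (Matrix.diagonal (fun i => (b i : ℂ)) - A) ≥
      maxEigC (Matrix.diagonal (fun i => (b i : ℂ)) + ((r : ℂ) - 1)⁻¹ • A) := by
  classical
  have hn : Nonempty (Fin n) := by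
    rcases hp ⟨0, by omega⟩ with ⟨j, _⟩; exact ⟨j⟩
  have hr0 : r ≠ 0 := by omega
  set c : ℂ := ((r : ℂ) - 1)⁻¹ with hc
  have hrc : ((r : ℂ) - 1) ≠ 0 := by
    intro h
    have h1 : (r : ℂ) = ((1 : ℕ) : ℂ) := by push_cast; linear_combination h
    have : r = 1 := Nat.cast_injective h1
    omega
  have hcstar : star c = c := by
    rw [hc, star_inv₀]
    congr 1
    simp [RCLike.star_def, map_sub]
  set D : Matrix (Fin n) (Fin n) ℂ := Matrix.diagonal (fun i => (b i : ℂ)) with hD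
  have hDH : D.IsHermitian := by
    apply Matrix.isHermitian_diagonal_iff.mpr
    intro i
    exact Complex.conj_ofReal (b i)
  have hCH : (D + c • A).IsHermitian := by
    refine hDH.add ?_
    unfold Matrix.IsHermitian
    rw [Matrix.conjTranspose_smul, hA.eq, hcstar]
  have hMH : (D - A).IsHermitian := hDH.sub hA
  obtain ⟨i0, hi0⟩ := maxEigC_attained hCH
  set lam : ℝ := hCH.eigenvalues i0 with hlam
  set x : Fin n → ℂ := ⇑(hCH.eigenvectorBasis i0) with hx
  have hx1 : star x ⬝ᵥ x = 1 := by
    have h : (inner ℂ (hCH.eigenvectorBasis i0) (hCH.eigenvectorBasis i0) : ℂ) = 1 := by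
      rw [inner_self_eq_norm_sq_to_K, hCH.eigenvectorBasis.orthonormal.1 i0]
      norm_num
    rw [EuclideanSpace.inner_eq_star_dotProduct] at h
    rw [dotProduct_comm] at h
    exact h
  have hxC : (D + c • A) *ᵥ x = (lam : ℂ) • x := by
    have h := hCH.mulVec_eigenvectorBasis i0
    rw [← hx] at h
    rw [h]
    ext j
    simp [Complex.real_smul, hlam]
  have hlamval : star x ⬝ᵥ ((D + c • A) *ᵥ x) = (lam : ℂ) := by
    rw [hxC, dotProduct_smul, hx1, smul_eq_mul, mul_one]
  -- roots of unity setup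
  set ω : ℂ := Complex.exp (2 * Real.pi * Complex.I / r) with hw
  have hω : IsPrimitiveRoot ω r := Complex.isPrimitiveRoot_exp r hr0
  have habs : ∀ m : ℕ, (starRingEnd ℂ) (ω ^ m) * ω ^ m = 1 := by
    intro m
    rw [mul_comm, Complex.mul_conj]
    norm_cast
    rw [show Complex.normSq (ω ^ m) = Complex.normSq ω ^ m from map_pow Complex.normSq ω m]
    have h1 : Complex.normSq ω = 1 := by
      have := hω.norm'_eq_one hr0
      rw [Complex.normSq_eq_norm_sq, this]
      norm_num
    rw [h1, one_pow]
  set y : ℕ → Fin n → ℂ := fun s j => ω ^ (s * (p j : ℕ)) * x j with hy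
  set z : Fin n → Fin n → ℂ := fun j k => (starRingEnd ℂ) (ω ^ (p j : ℕ)) * ω ^ (p k : ℕ)
    with hz
  have hzentry : ∀ (s : ℕ) (j k : Fin n),
      (starRingEnd ℂ) (y s j) * y s k = z j k ^ s * ((starRingEnd ℂ) (x j) * x k) := by
    intro s j k
    have e1 : (starRingEnd ℂ) (ω ^ (s * (p j : ℕ))) = ((starRingEnd ℂ) (ω ^ (p j : ℕ))) ^ s := by
      rw [← _root_.map_pow, ← pow_mul']
    have e2 : ω ^ (s * (p k : ℕ)) = (ω ^ (p k : ℕ)) ^ s := pow_mul' ω s _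
    simp only [hy, hz, _root_.map_mul, e1, e2]
    ring
  have hzdiag : ∀ j k : Fin n, p j = p k → z j k = 1 := by
    intro j k h
    rw [hz]
    simp only [h]
    exact habs _
  have hzsum : ∀ j k : Fin n, p j ≠ p k → ∑ s ∈ Finset.Ico 1 r, z j k ^ s = -1 := by
    intro j k h
    have hzr : z j k ^ r = 1 := by
      calc z j k ^ r = (starRingEnd ℂ) ((ω ^ (p j : ℕ)) ^ r) * (ω ^ (p k : ℕ)) ^ r := by
            simp only [hz]; rw [mul_pow, ← _root_.map_pow]
        _ = 1 := by
            rw [pow_right_comm, hω.pow_eq_one, one_pow, pow_right_comm ω (p k : ℕ),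
              hω.pow_eq_one, one_pow, _root_.map_one, one_mul]
    have hne : z j k ≠ 1 := by
      intro heq
      have h2 : ω ^ (p k : ℕ) = ω ^ (p j : ℕ) := by
        have := congrArg (· * ω ^ (p j : ℕ)) heq
        simp only [one_mul] at this
        rw [hz] at this
        calc ω ^ (p k : ℕ)
            = ((starRingEnd ℂ) (ω ^ (p j : ℕ)) * ω ^ (p j : ℕ)) * ω ^ (p k : ℕ) := by
              rw [habs, one_mul]
          _ = (starRingEnd ℂ) (ω ^ (p j : ℕ)) * ω ^ (p k : ℕ) * ω ^ (p j : ℕ) := by ring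
          _ = ω ^ (p j : ℕ)  := by rw [this]
      exact h (Fin.ext (hω.pow_inj (p k).2 (p j).2 h2)).symm
    have hgeom : ∑ s ∈ Finset.range r, z j k ^ s = 0 := by
      rw [geom_sum_eq hne, hzr, sub_self, zero_div]
    rw [Finset.sum_range_eq_add_Ico _ (by omega : 0 < r), pow_zero] at hgeom
    linear_combination hgeom
  -- norms of the twisted vectors
  have hyy : ∀ s : ℕ, star (y s) ⬝ᵥ (y s) = 1 := by
    intro s
    have e1 : star (y s) ⬝ᵥ (y s) = ∑ j, (starRingEnd ℂ) (y s j) * y s j := by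
      simp [dotProduct, Complex.star_def]
    have e2 : star x ⬝ᵥ x = ∑ j, (starRingEnd ℂ) (x j) * x j := by
      simp [dotProduct, Complex.star_def]
    rw [e1]
    calc ∑ j, (starRingEnd ℂ) (y s j) * y s j
        = ∑ j, (starRingEnd ℂ) (x j) * x j := by
          refine Finset.sum_congr rfl fun j _ => ?_
          rw [hzentry s j j, hzdiag j j rfl, one_pow, one_mul]
      _ = 1 := by rw [← e2, hx1]
  -- diagonal part is unchanged
  have hyD : ∀ s : ℕ, star (y s) ⬝ᵥ (D *ᵥ y s) = star x ⬝ᵥ (D *ᵥ x) := by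
    intro s
    rw [quadForm_expand, quadForm_expand]
    refine Finset.sum_congr rfl fun j _ => Finset.sum_congr rfl fun k _ => ?_
    by_cases hjk : j = k
    · subst hjk
      have hzz := hzentry s j j
      rw [hzdiag j j rfl, one_pow, one_mul] at hzz
      calc (starRingEnd ℂ) (y s j) * D j j * y s j
          = D j j * ((starRingEnd ℂ) (y s j) * y s j) := by ring
        _ = D j j * ((starRingEnd ℂ) (x j) * x j) := by rw [hzz]
        _ = (starRingEnd ℂ) (x j) * D j j * x j := by ring
    · rw [hD, Matrix.diagonal_apply_ne _ hjk]
      ring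
  -- the A part sums to minus the quadratic form
  have hyA : ∑ s ∈ Finset.Ico 1 r, star (y s) ⬝ᵥ (A *ᵥ y s) = -(star x ⬝ᵥ (A *ᵥ x)) := by
    have expand : ∀ s : ℕ, star (y s) ⬝ᵥ (A *ᵥ y s)
        = ∑ j, ∑ k, z j k ^ s * ((starRingEnd ℂ) (x j) * A j k * x k) := by
      intro s
      rw [quadForm_expand]
      refine Finset.sum_congr rfl fun j _ => Finset.sum_congr rfl fun k _ => ?_
      have hzz := hzentry s j k
      calc (starRingEnd ℂ) (y s j) * A j k * y s k
          = A j k * ((starRingEnd ℂ) (y s j) * y s k) := by ring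
        _ = A j k * (z j k ^ s * ((starRingEnd ℂ) (x j) * x k)) := by rw [hzz]
        _ = z j k ^ s * ((starRingEnd ℂ) (x j) * A j k * x k) := by ring
    calc ∑ s ∈ Finset.Ico 1 r, star (y s) ⬝ᵥ (A *ᵥ y s)
        = ∑ s ∈ Finset.Ico 1 r, ∑ j, ∑ k,
            z j k ^ s * ((starRingEnd ℂ) (x j) * A j k * x k) :=
          Finset.sum_congr rfl fun s _ => expand s
      _ = ∑ j, ∑ k, (∑ s ∈ Finset.Ico 1 r, z j k ^ s) *
            ((starRingEnd ℂ) (x j) * A j k * x k) := by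
          rw [Finset.sum_comm]
          refine Finset.sum_congr rfl fun j _ => ?_
          rw [Finset.sum_comm]
          exact Finset.sum_congr rfl fun k _ => (Finset.sum_mul _ _ _).symm
      _ = ∑ j, ∑ k, -((starRingEnd ℂ) (x j) * A j k * x k) := by
          refine Finset.sum_congr rfl fun j _ => Finset.sum_congr rfl fun k _ => ?_
          by_cases hpjk : p j = p k
          · rw [hblock j k hpjk]; ring
          · rw [hzsum j k hpjk]; ring
      _ = -(star x ⬝ᵥ (A *ᵥ x)) := by
          rw [quadForm_expand]
          simp
  set t : ℝ := maxEigC (D - A) with htdef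
  -- Rayleigh upper bound for each twisted vector
  have hub : ∀ s : ℕ, (star (y s) ⬝ᵥ ((D - A) *ᵥ y s)).re ≤ t := by
    intro s
    have h := rayleigh_le hMH (y s)
    rw [hyy s] at h
    simpa using h
  have hsum_le : ∑ s ∈ Finset.Ico 1 r, (star (y s) ⬝ᵥ ((D - A) *ᵥ y s)).re
      ≤ ((r : ℝ) - 1) * t := by
    calc ∑ s ∈ Finset.Ico 1 r, (star (y s) ⬝ᵥ ((D - A) *ᵥ y s)).re
        ≤ ∑ _s ∈ Finset.Ico 1 r, t := Finset.sum_le_sum fun s _ => hub s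
      _ = ((r : ℝ) - 1) * t := by
          rw [Finset.sum_const, Nat.card_Ico, nsmul_eq_mul]
          congr 1
          push_cast [Nat.cast_sub (by omega : 1 ≤ r)]
          ring
  have hsum_eq : (∑ s ∈ Finset.Ico 1 r, star (y s) ⬝ᵥ ((D - A) *ᵥ y s))
      = ((r : ℂ) - 1) * (star x ⬝ᵥ (D *ᵥ x)) + star x ⬝ᵥ (A *ᵥ x) := by
    have hsplit : ∀ s : ℕ, star (y s) ⬝ᵥ ((D - A) *ᵥ y s)
        = star (y s) ⬝ᵥ (D *ᵥ y s) - star (y s) ⬝ᵥ (A *ᵥ y s) := by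
      intro s; rw [Matrix.sub_mulVec, dotProduct_sub]
    rw [Finset.sum_congr rfl fun s _ => hsplit s, Finset.sum_sub_distrib, hyA,
      Finset.sum_congr rfl fun s _ => hyD s, Finset.sum_const, Nat.card_Ico, nsmul_eq_mul]
    push_cast [Nat.cast_sub (by omega : 1 ≤ r)]
    ring
  have hlameq : ((r : ℝ) - 1) * lam
      = (((r : ℂ) - 1) * (star x ⬝ᵥ (D *ᵥ x)) + star x ⬝ᵥ (A *ᵥ x)).re := by
    have h1 : star x ⬝ᵥ ((D + c • A) *ᵥ x)
        = star x ⬝ᵥ (D *ᵥ x) + c * (star x ⬝ᵥ (A *ᵥ x)) := by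
      rw [Matrix.add_mulVec, dotProduct_add, Matrix.smul_mulVec, dotProduct_smul,
        smul_eq_mul]
    have h2 : ((((r : ℝ) - 1) * lam : ℝ) : ℂ)
        = ((r : ℂ) - 1) * (star x ⬝ᵥ (D *ᵥ x)) + star x ⬝ᵥ (A *ᵥ x) := by
      push_cast
      rw [← hlamval, h1, hc, mul_add]
      congr 1
      rw [← mul_assoc, mul_inv_cancel₀ hrc, one_mul]
    rw [← h2, Complex.ofReal_re]
  have hre : (∑ s ∈ Finset.Ico 1 r, star (y s) ⬝ᵥ ((D - A) *ᵥ y s)).re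
      = ∑ s ∈ Finset.Ico 1 r, (star (y s) ⬝ᵥ ((D - A) *ᵥ y s)).re :=
    Complex.re_sum _ _
  have hfinal : ((r : ℝ) - 1) * lam ≤ ((r : ℝ) - 1) * t := by
    rw [hlameq, ← hsum_eq, hre]
    exact hsum_le
  have hr1 : (0 : ℝ) < (r : ℝ) - 1 := by
    have h2r : (2 : ℝ) ≤ (r : ℝ) := by exact_mod_cast hr
    linarith
  have hlamt : lam ≤ t := le_of_mul_le_mul_left hfinal hr1
  rw [ge_iff_le, hi0]
  exact hlamt
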